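/- Let G be a group, K_c ≤ G a subgroup, and let K_1,...,K_{l_1}, K_{l_1+1},...,K_{l_3} be subgroups containing K_c, where l_3 = l_1 + 1 + l_2 for some l_2. Consider the quotients Γ_1 = (G × K_1 × ... × K_{l_1})/K_c^{l_1+1}, Γ_2 = (G × K_{l_1+2} × ... × K_{l_3})/K_c^{l_2+1}, and Γ_3 = (G × K_1 × ... × K_{l_3})/K_c^{l_3+1} under the actions ((g_0,k_1,...,k_l),(h_0,...,h_l)) ↦ (g_0h_0, h_0^{-1}k_1h_1, ..., h_{l-1}^{-1}k_lh_l), with projections p_i sending [(g_0,k_1,...)] to the coset g_0 K in G/K for a fixed subgroup K containing all the K_i. Then the map Φ from the fiber product Γ_1 ×_{G/K} Γ_2 = {([(g_0,k_1,...,k_{l_1})], [(g̃_0, k̃_1,...,k̃_{l_2})]) : g_0 K = g̃_0 K} to Γ_3 given by Φ([(g_0,k_1,...,k_{l_1})],[(g̃_0,k̃_1,...,k̃_{l_2})]) = [(g_0, k_1, ..., k_{l_1}, (g_0 k_1 ⋯ k_{l_1})^{-1} g̃_0, k̃_1, ..., k̃_{l_2})] is a well-defined bijection, with inverse Ψ([(g_0,k_1,...,k_{l_3})])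 = ([(g_0,k_1,...,k_{l_1})], [(g_0 k_1 ⋯ k_{l_1} k_{l_1+1}, k_{l_1+2}, ..., k_{l_3})]). -/

import Mathlib

/-- The orbit relation of the right action of `Kc^{l+1}` on
`W = G × K₁ × ⋯ × K_l`,
`(g₀, k₁, …, k_l)·(h₀, …, h_l) = (g₀h₀, h₀⁻¹k₁h₁, …, h_{l-1}⁻¹k_lh_l)`. -/
def gammaRel {G : Type*} [Group G] {l : ℕ} (Kc : Subgroup G)
    (Ks : Fin l → Subgroup G) (w w' : G × ∀ i, Ks i) : Prop :=
  ∃ h : Fin (l + 1) → Kc,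
    w'.1 = w.1 * (h 0 : G) ∧
    ∀ i, (w'.2 i : G) = ((h i.castSucc : G))⁻¹ * (w.2 i : G) * (h i.succ : G)

/-- The quotient `Γ = W / Kc^{l+1}` (Ziller's completing manifold, as a set). -/
def Gamma {G : Type*} [Group G] {l : ℕ} (Kc : Subgroup G)
    (Ks : Fin l → Subgroup G) :=
  Quot (gammaRel Kc Ks)

/-- The projection `Γ → G/K`, `[(g₀, k₁, …, k_l)] ↦ g₀K`. -/
def gammaProj {G : Type*} [Group G] {l : ℕ} (Kc K : Subgroup G) (hKcK : Kc ≤ K)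
    (Ks : Fin l → Subgroup G) : Gamma Kc Ks → G ⧸ K :=
  Quot.lift (fun w => (QuotientGroup.mk w.1 : G ⧸ K)) (by
    rintro w w' ⟨h, h1, -⟩
    try dsimp only
    rw [h1, eq_comm]
    exact QuotientGroup.mk_mul_of_mem w.1 (hKcK (h 0).2))

/-- Assembling a tuple for `Γ₃` out of a tuple for `Γ₁`, a middle element of `K`,
and a tuple for `Γ₂`. -/
def combineFun {G : Type*} [Group G] {l1 l2 : ℕ} (A : Fin l1 → Subgroup G)
    (K : Subgroup G) (B : Fin l2 → Subgroup G)
    (k1 : ∀ i, A i) (m : K) (k2 : ∀ i, B i) :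
    ∀ j : Fin (l1 + 1 + l2), ↥(Fin.append (Fin.snoc A K) B j) :=
  fun j => Fin.addCases (motive := fun j => ↥(Fin.append (Fin.snoc A K) B j))
    (fun j1 => Fin.lastCases
      (motive := fun j1 => ↥(Fin.append (Fin.snoc A K) B (Fin.castAdd l2 j1)))
      ⟨(m : G), by rw [Fin.append_left, Fin.snoc_last]; exact m.2⟩
      (fun i => ⟨(k1 i : G), by rw [Fin.append_left, Fin.snoc_castSucc]; exact (k1 i).2⟩)
      j1)
    (fun j2 => ⟨(k2 j2 : G), by rw [Fin.append_right]; exact (k2 j2).2⟩) j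

namespace FPCMAux
variable {G : Type*} [Group G]

/-- partial products -/
def pp {l : ℕ} {Ks : Fin l → Subgroup G} (w : G × ∀ i, Ks i) (j : ℕ) : G :=
  w.1 * ((List.ofFn fun i => (w.2 i : G)).take j).prod

lemma pp_zero {l : ℕ} {Ks : Fin l → Subgroup G} (w : G × ∀ i, Ks i) :
    pp w 0 = w.1 := by simp [pp]

lemma pp_succ {l : ℕ} {Ks : Fin l → Subgroup G} (w : G × ∀ i, Ks i)
    (j : ℕ) (hj : j < l) :
    pp w (j + 1) = pp w j * (w.2 ⟨j, hj⟩ : G) := by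
  unfold pp
  rw [List.prod_take_succ _ _ (by simpa using hj), mul_assoc]
  congr 2
  simp

lemma pp_succ' {l : ℕ} {Ks : Fin l → Subgroup G} (w : G × ∀ i, Ks i)
    (i : Fin l) :
    pp w (i.val + 1) = pp w i.val * (w.2 i : G) := by
  rw [pp_succ w i.val i.isLt]

lemma pp_stable {l : ℕ} {Ks : Fin l → Subgroup G} (w : G × ∀ i, Ks i)
    {j : ℕ} (hj : l ≤ j) : pp w j = pp w l := by
  unfold pp
  rw [List.take_of_length_le (by simpa using hj), List.take_of_length_le (by simp)]

lemma pp_add {l l' : ℕ} {Ks : Fin l → Subgroup G} {Ks' : Fin l' → Subgroup G}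
    (w : G × ∀ i, Ks i) (w' : G × ∀ i, Ks' i) (o : ℕ)
    (h0 : pp w o = pp w' 0)
    (j : ℕ) (hj : o + j ≤ l) (hj' : j ≤ l')
    (hv : ∀ i (hi : i < j), (w.2 ⟨o + i, by omega⟩ : G) = (w'.2 ⟨i, by omega⟩ : G)) :
    pp w (o + j) = pp w' j := by
  induction j with
  | zero => exact h0
  | succ n ih =>
    rw [show o + (n + 1) = (o + n) + 1 by ring, pp_succ w (o + n) (by omega),
      pp_succ w' n (by omega), ih (by omega) (by omega) (fun i hi => hv i (by omega)),
      hv n (by omega)]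

lemma gammaRel_iff {l : ℕ} (Kc : Subgroup G) (Ks : Fin l → Subgroup G)
    (w w' : G × ∀ i, Ks i) :
    gammaRel Kc Ks w w' ↔ ∀ j : ℕ, (pp w j)⁻¹ * pp w' j ∈ Kc := by
  constructor
  · rintro ⟨h, h1, h2⟩
    set hh : ℕ → G := fun j => if hj : j < l + 1 then (h ⟨j, hj⟩ : G) else 1 with hhdef
    have hhe : ∀ (j : ℕ) (hj : j < l + 1), hh j = (h ⟨j, hj⟩ : G) := fun j hj => dif_pos hj
    have hhm : ∀ j : ℕ, hh j ∈ Kc := by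
      intro j
      by_cases hj : j < l + 1
      · rw [hhe j hj]; exact (h _).2
      · simp only [hhdef, dif_neg hj]
        exact Kc.one_mem
    have H : ∀ j : ℕ, j ≤ l → pp w' j = pp w j * hh j := by
      intro j
      induction j with
      | zero =>
        intro _
        rw [pp_zero, pp_zero, h1, hhe 0 (by omega),
          show (⟨0, by omega⟩ : Fin (l+1)) = 0 from Fin.ext (by simp)]
      | succ n ih =>
        intro hj
        have hn : n < l := by omega
        rw [pp_succ w n hn, pp_succ w' n hn, h2 ⟨n, hn⟩,
          show (⟨n, hn⟩ : Fin l).castSucc = (⟨n, by omega⟩ : Fin (l+1)) from Fin.ext rfl,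
          show (⟨n, hn⟩ : Fin l).succ = (⟨n + 1, by omega⟩ : Fin (l+1)) from Fin.ext rfl,
          ← hhe n (by omega), ← hhe (n+1) (by omega), ih (by omega)]
        group
    intro j
    rcases le_or_gt j l with hj | hj
    · rw [H j hj]
      simpa using hhm j
    · rw [pp_stable w (le_of_lt hj), pp_stable w' (le_of_lt hj), H l le_rfl]
      simpa using hhm l
  · intro H
    refine ⟨fun j => ⟨(pp w j.val)⁻¹ * pp w' j.val, H j.val⟩, ?_, ?_⟩
    · show w'.1 = w.1 * ((pp w (0:Fin (l+1)).val)⁻¹ * pp w' (0:Fin (l+1)).val)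
      have : ((0 : Fin (l+1)).val) = 0 := rfl
      rw [this, pp_zero, pp_zero]
      group
    · intro i
      show (w'.2 i : G) = ((pp w i.castSucc.val)⁻¹ * pp w' i.castSucc.val)⁻¹ *
        (w.2 i : G) * ((pp w i.succ.val)⁻¹ * pp w' i.succ.val)
      have e1 : i.castSucc.val = i.val := rfl
      have e2 : i.succ.val = i.val + 1 := rfl
      rw [e1, e2, pp_succ' w i, pp_succ' w' i]
      group

def tq {l : ℕ} (Kc : Subgroup G) (Ks : Fin l → Subgroup G) :
    Gamma Kc Ks → ℕ → G ⧸ Kc :=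
  Quot.lift (fun w j => (QuotientGroup.mk (pp w j) : G ⧸ Kc)) (by
    intro w w' hrel
    funext j
    exact QuotientGroup.eq.mpr (((gammaRel_iff Kc Ks w w').mp hrel) j))

lemma mk_eq_iff {l : ℕ} (Kc : Subgroup G) (Ks : Fin l → Subgroup G)
    (w w' : G × ∀ i, Ks i) :
    Quot.mk (gammaRel Kc Ks) w = Quot.mk (gammaRel Kc Ks) w' ↔
      ∀ j : ℕ, (pp w j)⁻¹ * pp w' j ∈ Kc := by
  constructor
  · intro hq j
    have := congrFun (congrArg (tq Kc Ks) hq) j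
    exact QuotientGroup.eq.mp this
  · intro H
    exact Quot.sound ((gammaRel_iff Kc Ks w w').mpr H)

end FPCMAux

namespace FPCMAux
variable {G : Type*} [Group G] {l1 l2 : ℕ}
  (A : Fin l1 → Subgroup G) (K : Subgroup G) (B : Fin l2 → Subgroup G)

lemma C_le (hAK : ∀ i, A i ≤ K) (hBK : ∀ i, B i ≤ K) :
    ∀ j, Fin.append (Fin.snoc A K) B j ≤ K := by
  intro j
  induction j using Fin.addCases with
  | left i =>
    rw [Fin.append_left]
    induction i using Fin.lastCases with
    | last => rw [Fin.snoc_last]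
    | cast i => rw [Fin.snoc_castSucc]; exact hAK i
  | right i => rw [Fin.append_right]; exact hBK i

def aPart (w : G × ∀ j, ↥(Fin.append (Fin.snoc A K) B j)) : G × ∀ i, A i :=
  (w.1, fun i => ⟨(w.2 (Fin.castAdd l2 i.castSucc) : G), by
    have hS : Fin.append (Fin.snoc A K) B (Fin.castAdd l2 i.castSucc) = A i := by
      rw [Fin.append_left, Fin.snoc_castSucc]
    exact hS.le (w.2 (Fin.castAdd l2 i.castSucc)).2⟩)

def bPart (w : G × ∀ j, ↥(Fin.append (Fin.snoc A K) B j)) : G × ∀ i, B i :=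
  (pp w (l1 + 1), fun i => ⟨(w.2 (Fin.natAdd (l1 + 1) i) : G), by
    have hS : Fin.append (Fin.snoc A K) B (Fin.natAdd (l1 + 1) i) = B i :=
      Fin.append_right _ _ _
    exact hS.le (w.2 (Fin.natAdd (l1 + 1) i)).2⟩)

lemma pp_aPart (w : G × ∀ j, ↥(Fin.append (Fin.snoc A K) B j))
    {j : ℕ} (hj : j ≤ l1) : pp w j = pp (aPart A K B w) j := by
  have := pp_add w (aPart A K B w) 0 (by rw [pp_zero, pp_zero]; rfl) j
    (by omega) hj (fun i hi => by
      show (w.2 ⟨0 + i, by omega⟩ : G) = ((aPart A K B w).2 ⟨i, by omega⟩ : G)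
      rw [show (⟨0 + i, by omega⟩ : Fin (l1 + 1 + l2))
          = Fin.castAdd l2 (Fin.castSucc ⟨i, by omega⟩) from Fin.ext (by simp)]
      rfl)
  simpa using this

lemma pp_bPart (w : G × ∀ j, ↥(Fin.append (Fin.snoc A K) B j))
    {j : ℕ} (hj : j ≤ l2) : pp w (l1 + 1 + j) = pp (bPart A K B w) j := by
  exact pp_add w (bPart A K B w) (l1 + 1) (by rw [pp_zero]; rfl) j
    (by omega) hj (fun i hi => by
      rfl)

lemma aPart_combine (k1 : ∀ i, A i) (m : K) (k2 : ∀ i, B i) (g : G) :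
    aPart A K B (g, combineFun A K B k1 m k2) = (g, k1) := by
  refine Prod.ext rfl ?_
  funext i
  refine Subtype.ext ?_
  show (combineFun A K B k1 m k2 (Fin.castAdd l2 i.castSucc) : G) = (k1 i : G)
  unfold combineFun
  rw [Fin.addCases_left, Fin.lastCases_castSucc]

lemma combine_middle (k1 : ∀ i, A i) (m : K) (k2 : ∀ i, B i) :
    (combineFun A K B k1 m k2 (Fin.castAdd l2 (Fin.last l1)) : G) = (m : G) := by
  unfold combineFun
  rw [Fin.addCases_left, Fin.lastCases_last]

lemma combine_right (k1 : ∀ i, A i) (m : K) (k2 : ∀ i, B i) (i : Fin l2) :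
    (combineFun A K B k1 m k2 (Fin.natAdd (l1 + 1) i) : G) = (k2 i : G) := by
  unfold combineFun
  rw [Fin.addCases_right]

lemma pp_full {l : ℕ} {Ks : Fin l → Subgroup G} (w : G × ∀ i, Ks i) :
    pp w l = w.1 * (List.ofFn fun i => (w.2 i : G)).prod := by
  unfold pp
  rw [List.take_of_length_le (by simp)]

lemma bPart_combine (k1 : ∀ i, A i) (m : K) (k2 : ∀ i, B i) (g : G) :
    bPart A K B (g, combineFun A K B k1 m k2) =
      (g * (List.ofFn fun i => (k1 i : G)).prod * (m : G), k2) := by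
  refine Prod.ext ?_ ?_
  · show pp (g, combineFun A K B k1 m k2) (l1 + 1) = _
    rw [pp_succ _ l1 (by omega),
      show ((g, combineFun A K B k1 m k2).2 ⟨l1, by omega⟩ : G)
        = (combineFun A K B k1 m k2 (Fin.castAdd l2 (Fin.last l1)) : G) from rfl,
      combine_middle, pp_aPart A K B _ le_rfl, aPart_combine]
    rw [show pp ((g, k1) : G × ∀ i, A i) l1 = _ from pp_full (g, k1)]
  · funext i
    exact Subtype.ext (combine_right A K B k1 m k2 i)

end FPCMAux

namespace FPCMAux
variable {G : Type*} [Group G] {l1 l2 : ℕ}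
  (A : Fin l1 → Subgroup G) (K : Subgroup G) (B : Fin l2 → Subgroup G)
  (Kc : Subgroup G) (hKcK : Kc ≤ K) (hAK : ∀ i, A i ≤ K) (hBK : ∀ i, B i ≤ K)

def psi (hAK : ∀ i, A i ≤ K) (hBK : ∀ i, B i ≤ K) (w : G × ∀ j, ↥(Fin.append (Fin.snoc A K) B j)) :
    {xy : Gamma Kc A × Gamma Kc B //
      gammaProj Kc K hKcK A xy.1 = gammaProj Kc K hKcK B xy.2} :=
  ⟨(Quot.mk _ (aPart A K B w), Quot.mk _ (bPart A K B w)), by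
    show (QuotientGroup.mk (aPart A K B w).1 : G ⧸ K) =
      QuotientGroup.mk (bPart A K B w).1
    rw [QuotientGroup.eq]
    show (w.1)⁻¹ * pp w (l1 + 1) ∈ K
    unfold pp
    rw [inv_mul_cancel_left]
    refine list_prod_mem ?_
    intro x hx
    have hx' := List.mem_of_mem_take hx
    obtain ⟨i, rfl⟩ := List.mem_ofFn.mp hx'
    exact C_le A K B hAK hBK _ (w.2 i).2⟩

lemma psi_wd (w w' : G × ∀ j, ↥(Fin.append (Fin.snoc A K) B j))
    (hrel : gammaRel Kc (Fin.append (Fin.snoc A K) B) w w') :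
    psi A K B Kc hKcK hAK hBK w = psi A K B Kc hKcK hAK hBK w' := by
  have R3 := (gammaRel_iff Kc _ w w').mp hrel
  refine Subtype.ext (Prod.ext ?_ ?_)
  · show Quot.mk _ (aPart A K B w) = Quot.mk _ (aPart A K B w')
    rw [mk_eq_iff]
    intro j
    rcases le_or_gt j l1 with hj | hj
    · rw [← pp_aPart A K B w hj, ← pp_aPart A K B w' hj]
      exact R3 j
    · rw [pp_stable _ hj.le, pp_stable _ hj.le, ← pp_aPart A K B w le_rfl,
        ← pp_aPart A K B w' le_rfl]
      exact R3 l1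
  · show Quot.mk _ (bPart A K B w) = Quot.mk _ (bPart A K B w')
    rw [mk_eq_iff]
    intro j
    rcases le_or_gt j l2 with hj | hj
    · rw [← pp_bPart A K B w hj, ← pp_bPart A K B w' hj]
      exact R3 (l1 + 1 + j)
    · rw [pp_stable _ hj.le, pp_stable _ hj.le, ← pp_bPart A K B w le_rfl,
        ← pp_bPart A K B w' le_rfl]
      exact R3 (l1 + 1 + l2)

lemma psi_inj (w w' : G × ∀ j, ↥(Fin.append (Fin.snoc A K) B j))
    (h : psi A K B Kc hKcK hAK hBK w = psi A K B Kc hKcK hAK hBK w') :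
    Quot.mk (gammaRel Kc (Fin.append (Fin.snoc A K) B)) w = Quot.mk _ w' := by
  have h1 : Quot.mk _ (aPart A K B w) = Quot.mk _ (aPart A K B w') :=
    congrArg (fun z => z.1.1) h
  have h2 : Quot.mk _ (bPart A K B w) = Quot.mk _ (bPart A K B w') :=
    congrArg (fun z => z.1.2) h
  rw [mk_eq_iff] at h1 h2 ⊢
  intro j
  rcases le_or_gt j l1 with hj | hj
  · rw [pp_aPart A K B w hj, pp_aPart A K B w' hj]
    exact h1 j
  · rcases le_or_gt j (l1 + 1 + l2) with hj2 | hj2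
    · obtain ⟨i, rfl⟩ : ∃ i, j = l1 + 1 + i := ⟨j - (l1 + 1), by omega⟩
      rw [pp_bPart A K B w (by omega), pp_bPart A K B w' (by omega)]
      exact h2 i
    · rw [pp_stable w (by omega), pp_stable w' (by omega),
        pp_bPart A K B w le_rfl, pp_bPart A K B w' le_rfl]
      exact h2 l2

lemma psi_comb (w1 : G × ∀ i, A i) (w2 : G × ∀ i, B i) (m : K)
    (hm : (m : G) = (w1.1 * (List.ofFn fun i => (w1.2 i : G)).prod)⁻¹ * w2.1)
    (hc : gammaProj Kc K hKcK A (Quot.mk _ w1)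
        = gammaProj Kc K hKcK B (Quot.mk _ w2)) :
    psi A K B Kc hKcK hAK hBK (w1.1, combineFun A K B w1.2 m w2.2) =
      ⟨(Quot.mk _ w1, Quot.mk _ w2), hc⟩ := by
  refine Subtype.ext (Prod.ext ?_ ?_)
  · show Quot.mk _ (aPart A K B (w1.1, combineFun A K B w1.2 m w2.2))
      = Quot.mk (gammaRel Kc A) w1
    rw [aPart_combine]
  · show Quot.mk _ (bPart A K B (w1.1, combineFun A K B w1.2 m w2.2))
      = Quot.mk (gammaRel Kc B) w2
    rw [bPart_combine]
    congr 1
    refine Prod.ext ?_ rfl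
    show w1.1 * (List.ofFn fun i => (w1.2 i : G)).prod * (m : G) = w2.1
    rw [hm, mul_inv_cancel_left]

end FPCMAux

/-- The map `Φ` from the fiber product `Γ₁ ×_{G/K} Γ₂` to `Γ₃`,
`Φ([(g₀,k₁,…,k_{l₁})],[(g̃₀,k̃₁,…,k̃_{l₂})])
  = [(g₀, k₁, …, k_{l₁}, (g₀k₁⋯k_{l₁})⁻¹g̃₀, k̃₁, …, k̃_{l₂})]`,
is a well-defined bijection. -/
theorem fiber_product_completing_manifolds_bijection {G : Type*} [Group G]
    {l1 l2 : ℕ} (Kc K : Subgroup G) (hKcK : Kc ≤ K)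
    (A : Fin l1 → Subgroup G) (B : Fin l2 → Subgroup G)
    (hAc : ∀ i, Kc ≤ A i) (hAK : ∀ i, A i ≤ K)
    (hBc : ∀ i, Kc ≤ B i) (hBK : ∀ i, B i ≤ K) :
    ∃ Φ : {xy : Gamma Kc A × Gamma Kc B //
            gammaProj Kc K hKcK A xy.1 = gammaProj Kc K hKcK B xy.2} →
          Gamma Kc (Fin.append (Fin.snoc A K) B),
      Function.Bijective Φ ∧
      ∀ (w1 : G × ∀ i, A i) (w2 : G × ∀ i, B i)
        (hc : gammaProj Kc K hKcK A (Quot.mk _ w1)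
            = gammaProj Kc K hKcK B (Quot.mk _ w2)),
        Φ ⟨(Quot.mk _ w1, Quot.mk _ w2), hc⟩ =
          Quot.mk _ (w1.1, combineFun A K B w1.2
            ⟨(w1.1 * (List.ofFn fun i => (w1.2 i : G)).prod)⁻¹ * w2.1, by
              have hc' : (QuotientGroup.mk w1.1 : G ⧸ K) = QuotientGroup.mk w2.1 := hc
              have h1 : w1.1⁻¹ * w2.1 ∈ K := QuotientGroup.eq.mp hc'
              have h2 : (List.ofFn fun i => (w1.2 i : G)).prod ∈ K := by
                refine list_prod_mem ?_
                intro x hx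
                obtain ⟨i, rfl⟩ := List.mem_ofFn.mp hx
                exact hAK i (w1.2 i).2
              have h3 := K.mul_mem (K.inv_mem h2) h1
              have h4 : (w1.1 * (List.ofFn fun i => (w1.2 i : G)).prod)⁻¹ * w2.1
                  = ((List.ofFn fun i => (w1.2 i : G)).prod)⁻¹ * (w1.1⁻¹ * w2.1) := by
                group
              rw [h4]; exact h3⟩ w2.2) := by
  have hbij : Function.Bijective
      (Quot.lift (FPCMAux.psi A K B Kc hKcK hAK hBK)
        (FPCMAux.psi_wd A K B Kc hKcK hAK hBK)) := by
    constructor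
    · intro x y
      induction x using Quot.ind
      induction y using Quot.ind
      rename_i w w'
      exact fun h => FPCMAux.psi_inj A K B Kc hKcK hAK hBK w w' h
    · intro z
      obtain ⟨⟨x, y⟩, hc⟩ := z
      revert hc
      induction x using Quot.ind
      induction y using Quot.ind
      rename_i w1 w2
      intro hc
      have hc' : (QuotientGroup.mk w1.1 : G ⧸ K) = QuotientGroup.mk w2.1 := hc
      have h1 : w1.1⁻¹ * w2.1 ∈ K := QuotientGroup.eq.mp hc'
      have h2 : (List.ofFn fun i => (w1.2 i : G)).prod ∈ K := by
        refine list_prod_mem ?_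
        intro x hx
        obtain ⟨i, rfl⟩ := List.mem_ofFn.mp hx
        exact hAK i (w1.2 i).2
      have hm : (w1.1 * (List.ofFn fun i => (w1.2 i : G)).prod)⁻¹ * w2.1 ∈ K := by
        have h3 := K.mul_mem (K.inv_mem h2) h1
        have h4 : (w1.1 * (List.ofFn fun i => (w1.2 i : G)).prod)⁻¹ * w2.1
            = ((List.ofFn fun i => (w1.2 i : G)).prod)⁻¹ * (w1.1⁻¹ * w2.1) := by
          group
        rw [h4]; exact h3
      refine ⟨Quot.mk _ (w1.1, combineFun A K B w1.2 ⟨_, hm⟩ w2.2), ?_⟩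
      exact FPCMAux.psi_comb A K B Kc hKcK hAK hBK w1 w2 ⟨_, hm⟩ rfl hc
  refine ⟨(Equiv.ofBijective _ hbij).symm, (Equiv.ofBijective _ hbij).symm.bijective, ?_⟩
  intro w1 w2 hc
  exact (Equiv.symm_apply_eq _).mpr
    (FPCMAux.psi_comb A K B Kc hKcK hAK hBK w1 w2 _ rfl hc).symm
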